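/- Let ρ > 0, β > 0 and α > 0. Suppose p, q : [0,∞) → ℝ are differentiable and satisfy, for all t ≥ 0, p'(t) = ρ(1 − e^{p(t)}) − q(t) and q'(t) = −βαρ(1 − e^{p(t)}). Then p(t) → 0 and q(t) → 0 as t → ∞. (Global asymptotic stability of the origin for the transformed single-agent consumption system.) -/

import Mathlib

open Filter
set_option maxHeartbeats 1000000

section AuxLemmas

private lemma sas_exp_sub_nonneg (x : ℝ) : 0 ≤ Real.exp x - x - 1 := by
  have := Real.add_one_le_exp x; linarith

private lemma sas_sq_le_exp_sub (x : ℝ) (hx : 0 ≤ x) : x^2 ≤ 4*(Real.exp x - x - 1) := by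
  have hsq : Real.exp (x/2) * Real.exp (x/2) = Real.exp x := by rw [← Real.exp_add]; ring_nf
  have h1 : x/2 + 1 ≤ Real.exp (x/2) := Real.add_one_le_exp _
  nlinarith [sq_nonneg (Real.exp (x/2) - 1 - x/2)]

private lemma sas_exp_quad_lower (M x : ℝ) (hM : 1 ≤ M) (hx : Real.exp x ≤ M) :
    (Real.exp x - 1)^2 ≤ 4*M*(Real.exp x - x - 1) := by
  have hs : Real.exp (x/2) > 0 := Real.exp_pos _
  have hsq : Real.exp (x/2) * Real.exp (x/2) = Real.exp x := by
    rw [← Real.exp_add]; ring_nf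
  have h1 : x/2 + 1 ≤ Real.exp (x/2) := Real.add_one_le_exp _
  nlinarith [sq_nonneg (Real.exp (x/2) - 1), sq_nonneg (Real.exp (x/2) + 1),
    mul_nonneg (sq_nonneg (Real.exp (x/2) - 1)) (sub_nonneg.2 hM)]

private lemma sas_exp_quad_upper (m x : ℝ) (hm : 0 < m) (hm1 : m ≤ 1) (hx : m ≤ Real.exp x) :
    m*(Real.exp x - x - 1) ≤ 3*(Real.exp x - 1)^2 := by
  set s := Real.exp (x/2) with hs_def
  have hs : 0 < s := Real.exp_pos _
  have hsq : s * s = Real.exp x := by rw [hs_def, ← Real.exp_add]; ring_nf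
  have h1 : -(x/2) + 1 ≤ s⁻¹ := by
    rw [hs_def, ← Real.exp_neg]; exact (Real.add_one_le_exp _)
  have h1' : s * (-(x/2) + 1) ≤ 1 := by
    calc s * (-(x/2) + 1) ≤ s * s⁻¹ := by nlinarith
    _ = 1 := mul_inv_cancel₀ (ne_of_gt hs)
  have hms : m ≤ s * s := by rw [hsq]; exact hx
  have key1 : s * (Real.exp x - x - 1) ≤ (s-1)^2*(s+2) := by
    rw [← hsq]; nlinarith [h1']
  have hfac : m*(s+2) ≤ 3*s*(s+1)^2 := by
    nlinarith [mul_le_mul_of_nonneg_right hm1 hs.le, hms, hs.le, mul_pos hs hs]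
  have key2 : m * ((s-1)^2*(s+2)) ≤ 3*(s*((Real.exp x - 1)^2)) := by
    rw [← hsq]
    nlinarith [mul_nonneg (sq_nonneg (s-1)) (sub_nonneg.2 hfac)]
  have hmul := mul_le_mul_of_nonneg_left key1 hm.le
  have final : s * (m*(Real.exp x - x - 1)) ≤ s * (3*(Real.exp x -1)^2) := by
    nlinarith [key2, hmul]
  exact le_of_mul_le_mul_left final hs

private lemma sas_deriv_bound (ρ B m M ε E a b : ℝ) (hρ : 0 < ρ) (hm : 0 < m)
    (hE1 : m ≤ E) (hE2 : E ≤ M) (hε : 0 < ε)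
    (hc1 : ε*B ≤ ρ/2) (hc2 : 4*ε*ρ*M^2 ≤ m) :
    -(ρ*a^2) + ε*((B*a)*a + b*(E*(-(ρ*a) - b))) ≤ -(ρ/4)*a^2 - (ε*m/2)*b^2 := by
  have hE : 0 < E := lt_of_lt_of_le hm hE1
  have hcross : -(ε*ρ*E*(a*b)) ≤ (ρ/4)*a^2 + (ε*m/4)*b^2 := by
    rcases le_or_gt 0 (a*b) with h | h
    · have h0 : 0 ≤ (ε*ρ*E)*(a*b) := mul_nonneg (by positivity) h
      have r1 : 0 ≤ ρ/4*a^2 := by positivity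
      have r2 : 0 ≤ ε*m/4*b^2 := by positivity
      linarith
    · have hab : 0 ≤ -(a*b) := by linarith
      have h1 : (ε*ρ*E)*(-(a*b)) ≤ (ε*ρ*M)*(-(a*b)) :=
        mul_le_mul_of_nonneg_right
          (mul_le_mul_of_nonneg_left hE2 (by positivity)) hab
      have h2 : 4*m*(ρ*M*(-(a*b))) ≤ 4*(ρ^2*M^2)*a^2 + m^2*b^2 := by
        nlinarith [sq_nonneg (2*ρ*M*a + m*b)]
      have h2' := mul_le_mul_of_nonneg_left h2 hε.le
      have h3 := mul_le_mul_of_nonneg_right hc2 (mul_nonneg hρ.le (sq_nonneg a))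
      have h4 : (4*m)*((ε*ρ*M)*(-(a*b))) ≤ (4*m)*((ρ/4)*a^2 + (ε*m/4)*b^2) := by
        nlinarith [sq_nonneg b, mul_nonneg hε.le (sq_nonneg b)]
      have h5 := le_of_mul_le_mul_left (by linarith [h4] :
        (4*m)*((ε*ρ*M)*(-(a*b))) ≤ (4*m)*((ρ/4)*a^2 + (ε*m/4)*b^2)) (by linarith : (0:ℝ) < 4*m)
      nlinarith [h1, h5]
  have hb1 := mul_le_mul_of_nonneg_right hc1 (sq_nonneg a)
  have hb2 : 0 ≤ (ε*b^2)*(E - m) :=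
    mul_nonneg (mul_nonneg hε.le (sq_nonneg b)) (by linarith)
  nlinarith [hcross, hb1, hb2, mul_nonneg (mul_nonneg hε.le hm.le) (sq_nonneg b)]

end AuxLemmas

/-- Global asymptotic stability of the origin for the transformed single-agent
consumption system `p' = ρ(1 − e^p) − q`, `q' = −βαρ(1 − e^p)`. -/
theorem single_agent_global_stability (ρ β α : ℝ) (hρ : 0 < ρ) (hβ : 0 < β) (hα : 0 < α)
    (p q : ℝ → ℝ)
    (hp : ∀ t : ℝ, 0 ≤ t → HasDerivAt p (ρ * (1 - Real.exp (p t)) - q t) t)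
    (hq : ∀ t : ℝ, 0 ≤ t → HasDerivAt q (-β * α * ρ * (1 - Real.exp (p t))) t) :
    Tendsto p atTop (nhds 0) ∧ Tendsto q atTop (nhds 0) := by
  obtain ⟨B, hB_def⟩ : ∃ B : ℝ, B = β * α * ρ := ⟨_, rfl⟩
  have hB : 0 < B := by rw [hB_def]; positivity
  obtain ⟨u, hu_def⟩ : ∃ u : ℝ → ℝ, u = fun t => Real.exp (p t) - 1 := ⟨_, rfl⟩
  obtain ⟨V, hV_def⟩ : ∃ V : ℝ → ℝ, V = fun t => (Real.exp (p t) - p t - 1) + (q t)^2/(2*B) := ⟨_, rfl⟩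
  have hu' : ∀ t : ℝ, 0 ≤ t → HasDerivAt u (Real.exp (p t) * (-(ρ * u t) - q t)) t := by
    intro t ht
    have := ((hp t ht).exp).sub_const 1
    simp only [hu_def]
    refine this.congr_deriv ?_
    ring
  have hq' : ∀ t : ℝ, 0 ≤ t → HasDerivAt q (B * u t) t := by
    intro t ht
    have := hq t ht
    convert this using 1
    simp only [hu_def, hB_def]; ring
  have hV' : ∀ t : ℝ, 0 ≤ t → HasDerivAt V (-(ρ * (u t)^2)) t := by
    intro t ht
    have h1 := ((hp t ht).exp.sub (hp t ht)).sub_const 1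
    have h2 := ((hq' t ht).pow 2).div_const (2*B)
    have h3 := h1.add h2
    rw [hV_def]
    refine h3.congr_deriv ?_
    simp only [hu_def]
    field_simp
    ring
  have hVanti : AntitoneOn V (Set.Ici (0:ℝ)) := by
    apply antitoneOn_of_deriv_nonpos (convex_Ici 0)
    · exact fun t ht => (hV' t ht).continuousAt.continuousWithinAt
    · rw [interior_Ici]
      exact fun t ht => ((hV' t (le_of_lt ht)).differentiableAt).differentiableWithinAt
    · rw [interior_Ici]
      intro t ht
      rw [(hV' t ht.le).deriv]
      have : 0 ≤ ρ * (u t)^2 := by positivity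
      linarith
  have hVle : ∀ t : ℝ, 0 ≤ t → V t ≤ V 0 := fun t ht =>
    hVanti Set.self_mem_Ici ht ht
  have hVnn : ∀ t : ℝ, 0 ≤ V t := by
    intro t
    have h1 := sas_exp_sub_nonneg (p t)
    have h2 : 0 ≤ (q t)^2/(2*B) := by positivity
    simp only [hV_def]; linarith
  have hV0 : 0 ≤ V 0 := hVnn 0
  have hpart : ∀ t : ℝ, 0 ≤ t → Real.exp (p t) - p t - 1 ≤ V 0 := by
    intro t ht
    have hx : Real.exp (p t) - p t - 1 ≤ V t := by
      have h2 : 0 ≤ (q t)^2/(2*B) := by positivity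
      simp only [hV_def]; linarith
    exact hx.trans (hVle t ht)
  -- bounds on exp (p t)
  obtain ⟨M, hM_def⟩ : ∃ M : ℝ, M = Real.exp (Real.sqrt (4 * V 0)) := ⟨_, rfl⟩
  have hM1 : 1 ≤ M := hM_def ▸ Real.one_le_exp (Real.sqrt_nonneg _)
  have hM0 : (0:ℝ) < M := lt_of_lt_of_le one_pos hM1
  have hpM : ∀ t : ℝ, 0 ≤ t → Real.exp (p t) ≤ M := by
    intro t ht
    rw [hM_def]
    apply Real.exp_le_exp.2
    rcases le_or_gt (p t) 0 with h | h
    · exact h.trans (Real.sqrt_nonneg _)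
    · have h1 := sas_sq_le_exp_sub (p t) h.le
      have h2 := hpart t ht
      have h3 : (p t)^2 ≤ 4 * V 0 := by linarith
      calc p t = Real.sqrt ((p t)^2) := (Real.sqrt_sq h.le).symm
      _ ≤ Real.sqrt (4 * V 0) := Real.sqrt_le_sqrt h3
  obtain ⟨m, hm_def⟩ : ∃ m : ℝ, m = Real.exp (-(V 0 + 1)) := ⟨_, rfl⟩
  have hm : 0 < m := hm_def ▸ Real.exp_pos _
  have hm1 : m ≤ 1 := hm_def ▸ Real.exp_le_one_iff.2 (by linarith)
  have hpm : ∀ t : ℝ, 0 ≤ t → m ≤ Real.exp (p t) := by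
    intro t ht
    rw [hm_def]
    apply Real.exp_le_exp.2
    have h2 := hpart t ht
    have h3 : 0 < Real.exp (p t) := Real.exp_pos _
    linarith
  -- the perturbation parameter
  obtain ⟨ε, hε_def⟩ : ∃ e : ℝ, e = min (min (ρ/(2*B)) (m/(4*ρ*M^2))) (1/(4*M + 2*B + 1)) := ⟨_, rfl⟩
  have hε : 0 < ε := by
    rw [hε_def]
    exact lt_min (lt_min (by positivity) (by positivity)) (by positivity)
  have hc1 : ε*B ≤ ρ/2 := by
    have h1 : ε ≤ ρ/(2*B) := hε_def ▸ le_trans (min_le_left _ _) (min_le_left _ _)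
    calc ε*B ≤ (ρ/(2*B))*B := mul_le_mul_of_nonneg_right h1 hB.le
    _ = ρ/2 := by field_simp
  have hc2 : 4*ε*ρ*M^2 ≤ m := by
    have h1 : ε ≤ m/(4*ρ*M^2) := hε_def ▸ le_trans (min_le_left _ _) (min_le_right _ _)
    have h2 := mul_le_mul_of_nonneg_right h1 (by positivity : (0:ℝ) ≤ 4*ρ*M^2)
    calc 4*ε*ρ*M^2 = ε*(4*ρ*M^2) := by ring
    _ ≤ (m/(4*ρ*M^2))*(4*ρ*M^2) := h2
    _ = m := by field_simp
  have hc3 : ε*(4*M + 2*B + 1) ≤ 1 := by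
    have h1 : ε ≤ 1/(4*M + 2*B + 1) := hε_def ▸ min_le_right _ _
    have h2 := mul_le_mul_of_nonneg_right h1 (by positivity : (0:ℝ) ≤ 4*M + 2*B + 1)
    calc ε*(4*M + 2*B + 1) ≤ (1/(4*M + 2*B + 1))*(4*M + 2*B + 1) := h2
    _ = 1 := by field_simp
  have hε1 : ε ≤ 1 := by nlinarith [hc3, mul_nonneg hε.le hB.le, mul_nonneg hε.le hM0.le]
  -- quadratic comparison bounds
  have hD1 : ∀ t : ℝ, 0 ≤ t → (u t)^2 ≤ 4*M*(Real.exp (p t) - p t - 1) := by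
    intro t ht
    simpa [hu_def] using sas_exp_quad_lower M (p t) hM1 (hpM t ht)
  have hD2 : ∀ t : ℝ, 0 ≤ t → m*(Real.exp (p t) - p t - 1) ≤ 3*(u t)^2 := by
    intro t ht
    simpa [hu_def] using sas_exp_quad_upper m (p t) hm hm1 (hpm t ht)
  have hVlow1 : ∀ t : ℝ, 0 ≤ t → (u t)^2 ≤ 4*M*(V t) := by
    intro t ht
    have h1 := hD1 t ht
    have h2 : 0 ≤ (q t)^2/(2*B) := by positivity
    have h3 : 4*M*(Real.exp (p t) - p t - 1) ≤ 4*M*(V t) := by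
      apply mul_le_mul_of_nonneg_left _ (by positivity : (0:ℝ) ≤ 4*M)
      simp only [hV_def]; linarith
    linarith
  have hVlow2 : ∀ t : ℝ, (q t)^2 ≤ 2*B*(V t) := by
    intro t
    have h1 := sas_exp_sub_nonneg (p t)
    have h2 : (q t)^2 = 2*B*((q t)^2/(2*B)) := by field_simp
    have h3 : (q t)^2/(2*B) ≤ V t := by simp only [hV_def]; linarith
    calc (q t)^2 = 2*B*((q t)^2/(2*B)) := h2
    _ ≤ 2*B*(V t) := mul_le_mul_of_nonneg_left h3 (by positivity)
  -- the strict Lyapunov function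
  obtain ⟨W, hW_def⟩ : ∃ W : ℝ → ℝ, W = fun t => V t + ε * (q t * u t) := ⟨_, rfl⟩
  obtain ⟨DW, hDW_def⟩ : ∃ D : ℝ → ℝ, D = fun t =>
    -(ρ * (u t)^2) + ε * ((B * u t) * u t + q t * (Real.exp (p t) * (-(ρ * u t) - q t))) := ⟨_, rfl⟩
  have hW' : ∀ t : ℝ, 0 ≤ t → HasDerivAt W (DW t) t := by
    intro t ht
    rw [hW_def, hDW_def]
    exact (hV' t ht).add (((hq' t ht).mul (hu' t ht)).const_mul ε)
  -- W comparable to V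
  have hWV : ∀ t : ℝ, 0 ≤ t → V t / 2 ≤ W t := by
    intro t ht
    have h1 := hVlow1 t ht
    have h2 := hVlow2 t
    have h3 := mul_le_mul_of_nonneg_left h1 hε.le
    have h4 := mul_le_mul_of_nonneg_left h2 hε.le
    have h5 := mul_le_mul_of_nonneg_right hc3 (hVnn t)
    have h6 : 0 ≤ ε * (u t + q t)^2 := mul_nonneg hε.le (sq_nonneg _)
    simp only [hW_def]
    nlinarith [hVnn t, mul_nonneg hε.le (hVnn t)]
  have hWnn : ∀ t : ℝ, 0 ≤ t → 0 ≤ W t := by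
    intro t ht
    have e1 := hWV t ht
    have e2 := hVnn t
    linarith
  -- upper comparison : W ≤ C (u² + q²)
  obtain ⟨C, hC_def⟩ : ∃ C : ℝ, C = 3/m + 1/(2*B) + 1 := ⟨_, rfl⟩
  have hC : 0 < C := by rw [hC_def]; positivity
  have hWub : ∀ t : ℝ, 0 ≤ t → W t ≤ C * ((u t)^2 + (q t)^2) := by
    intro t ht
    have h1 := hD2 t ht
    have hVhigh : V t ≤ (3/m)*(u t)^2 + (q t)^2/(2*B) := by
      have hx : Real.exp (p t) - p t - 1 ≤ (3/m)*(u t)^2 := by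
        rw [← le_div_iff₀' hm] at h1
        calc Real.exp (p t) - p t - 1 ≤ 3*(u t)^2/m := h1
        _ = (3/m)*(u t)^2 := by ring
      simp only [hV_def]; linarith
    have h6 : 0 ≤ (u t + q t)^2 := sq_nonneg _
    have h7 : ε * (q t * u t) ≤ ((u t)^2 + (q t)^2)/2 := by
      nlinarith [mul_nonneg hε.le (sq_nonneg (u t - q t)),
        mul_nonneg (sub_nonneg.2 hε1) (add_nonneg (sq_nonneg (u t)) (sq_nonneg (q t)))]
    have h8 : 0 ≤ (3/m)*(q t)^2 := by positivity
    have h9 : 0 ≤ (u t)^2/(2*B) := by positivity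
    have h10 : (q t)^2/(2*B) = (1/(2*B))*(q t)^2 := by ring
    have h11 : (3/m)*(u t)^2 + (q t)^2/(2*B) + ((u t)^2 + (q t)^2)/2
        ≤ C * ((u t)^2 + (q t)^2) := by
      have expand : C * ((u t)^2 + (q t)^2)
          - ((3/m)*(u t)^2 + (q t)^2/(2*B) + ((u t)^2 + (q t)^2)/2)
          = (3/m)*(q t)^2 + (u t)^2/(2*B) + ((u t)^2 + (q t)^2)/2 := by
        rw [hC_def]; ring
      have h12 : 0 ≤ ((u t)^2 + (q t)^2)/2 := by positivity
      linarith [h8, h9, h12, expand]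
    simp only [hW_def]
    linarith [hVhigh, h7, h11]
  -- decay rate
  obtain ⟨lam, hlam_def⟩ : ∃ l : ℝ, l = (min (ρ/4) (ε*m/2)) / C := ⟨_, rfl⟩
  have hminpos : 0 < min (ρ/4) (ε*m/2) := lt_min (by positivity) (by positivity)
  have hlam : 0 < lam := hlam_def ▸ div_pos hminpos hC
  have hlamC : lam * C = min (ρ/4) (ε*m/2) := hlam_def ▸ div_mul_cancel₀ _ hC.ne'
  -- key differential inequality
  have hkey : ∀ t : ℝ, 0 ≤ t → DW t ≤ -(lam * W t) := by
    intro t ht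
    have hmain := sas_deriv_bound ρ B m M ε (Real.exp (p t)) (u t) (q t)
      hρ hm (hpm t ht) (hpM t ht) hε hc1 hc2
    have h1 : lam * W t ≤ lam * (C * ((u t)^2 + (q t)^2)) :=
      mul_le_mul_of_nonneg_left (hWub t ht) hlam.le
    have h2 : lam * (C * ((u t)^2 + (q t)^2)) = (min (ρ/4) (ε*m/2)) * ((u t)^2 + (q t)^2) := by
      rw [← hlamC]; ring
    have h3 : (min (ρ/4) (ε*m/2)) * ((u t)^2 + (q t)^2) ≤ (ρ/4)*(u t)^2 + (ε*m/2)*(q t)^2 := by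
      have a1 := mul_le_mul_of_nonneg_right (min_le_left (ρ/4) (ε*m/2)) (sq_nonneg (u t))
      have a2 := mul_le_mul_of_nonneg_right (min_le_right (ρ/4) (ε*m/2)) (sq_nonneg (q t))
      linarith
    have h4 : lam * W t ≤ (ρ/4)*(u t)^2 + (ε*m/2)*(q t)^2 := by
      rw [h2] at h1; linarith
    simp only [hDW_def]
    linarith [hmain]
  -- Gronwall-type argument : W(t) ≤ W(0) exp(-lam t)
  obtain ⟨G, hG_def⟩ : ∃ G : ℝ → ℝ, G = fun t => W t * Real.exp (lam * t) := ⟨_, rfl⟩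
  have hG' : ∀ t : ℝ, 0 ≤ t →
      HasDerivAt G (DW t * Real.exp (lam * t) + W t * (Real.exp (lam * t) * (lam * 1))) t := by
    intro t ht
    rw [hG_def]
    exact (hW' t ht).mul (((hasDerivAt_id t).const_mul lam).exp)
  have hGanti : AntitoneOn G (Set.Ici (0:ℝ)) := by
    apply antitoneOn_of_deriv_nonpos (convex_Ici 0)
    · exact fun t ht => (hG' t ht).continuousAt.continuousWithinAt
    · rw [interior_Ici]
      exact fun t ht => ((hG' t (le_of_lt ht)).differentiableAt).differentiableWithinAt
    · rw [interior_Ici]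
      intro t ht
      rw [(hG' t ht.le).deriv]
      have h1 := hkey t ht.le
      have h2 : 0 < Real.exp (lam * t) := Real.exp_pos _
      have h3 : DW t + lam * W t ≤ 0 := by linarith
      have h4 := mul_le_mul_of_nonneg_right h3 h2.le
      nlinarith
  have hWdecay : ∀ t : ℝ, 0 ≤ t → W t ≤ W 0 * Real.exp (-(lam * t)) := by
    intro t ht
    have h1 : G t ≤ G 0 := hGanti Set.self_mem_Ici ht ht
    have h3 : 0 < Real.exp (lam * t) := Real.exp_pos _
    rw [hG_def] at h1
    simp only at h1
    calc W t = (W t * Real.exp (lam * t)) * Real.exp (-(lam * t)) := by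
          rw [mul_assoc, ← Real.exp_add]; simp
    _ ≤ W 0 * Real.exp (-(lam * t)) := by
          apply mul_le_mul_of_nonneg_right _ (Real.exp_pos _).le
          calc W t * Real.exp (lam * t) ≤ W 0 * Real.exp (lam * 0) := h1
          _ = W 0 := by simp
  -- V tends to 0
  have hVdecay : ∀ t : ℝ, 0 ≤ t → V t ≤ 2 * W 0 * Real.exp (-(lam * t)) := by
    intro t ht
    have h1 := hWV t ht
    have h2 := hWdecay t ht
    linarith
  have hexp0 : Tendsto (fun t : ℝ => 2 * W 0 * Real.exp (-(lam * t))) atTop (nhds 0) := by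
    have h1 : Tendsto (fun t : ℝ => lam * t) atTop atTop :=
      Tendsto.const_mul_atTop hlam tendsto_id
    have h2 : Tendsto (fun t : ℝ => -(lam * t)) atTop atBot :=
      tendsto_neg_atTop_atBot.comp h1
    have h3 : Tendsto (fun t : ℝ => Real.exp (-(lam * t))) atTop (nhds 0) :=
      Real.tendsto_exp_atBot.comp h2
    have h4 := h3.const_mul (2 * W 0)
    simpa using h4
  have hVtend : Tendsto V atTop (nhds 0) := by
    apply tendsto_of_tendsto_of_tendsto_of_le_of_le' tendsto_const_nhds hexp0
    · exact Eventually.of_forall hVnn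
    · filter_upwards [eventually_ge_atTop (0:ℝ)] with t ht
      exact hVdecay t ht
  -- conclude for q
  have hq2tend : Tendsto (fun t => (q t)^2) atTop (nhds 0) := by
    have h1 := hVtend.const_mul (2*B)
    simp only [mul_zero] at h1
    apply tendsto_of_tendsto_of_tendsto_of_le_of_le' tendsto_const_nhds h1
    · exact Eventually.of_forall (fun t => sq_nonneg _)
    · exact Eventually.of_forall (fun t => hVlow2 t)
  have hqabs : Tendsto (fun t => |q t|) atTop (nhds 0) := by
    have h1 := (Real.continuous_sqrt.tendsto 0).comp hq2tend
    simp only [Function.comp_def, Real.sqrt_sq_eq_abs, Real.sqrt_zero] at h1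
    exact h1
  have hqtend : Tendsto q atTop (nhds 0) := by
    have hneg : Tendsto (fun t => -|q t|) atTop (nhds 0) := by simpa using hqabs.neg
    exact tendsto_of_tendsto_of_tendsto_of_le_of_le hneg hqabs
      (fun t => neg_abs_le _) (fun t => le_abs_self _)
  -- conclude for p
  have hu2tend : Tendsto (fun t => (u t)^2) atTop (nhds 0) := by
    have h1 := hVtend.const_mul (4*M)
    simp only [mul_zero] at h1
    apply tendsto_of_tendsto_of_tendsto_of_le_of_le' tendsto_const_nhds h1
    · exact Eventually.of_forall (fun t => sq_nonneg _)
    · filter_upwards [eventually_ge_atTop (0:ℝ)] with t ht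
      exact hVlow1 t ht
  have huabs : Tendsto (fun t => |u t|) atTop (nhds 0) := by
    have h1 := (Real.continuous_sqrt.tendsto 0).comp hu2tend
    simp only [Function.comp_def, Real.sqrt_sq_eq_abs, Real.sqrt_zero] at h1
    exact h1
  have hutend : Tendsto u atTop (nhds 0) := by
    have hneg : Tendsto (fun t => -|u t|) atTop (nhds 0) := by simpa using huabs.neg
    exact tendsto_of_tendsto_of_tendsto_of_le_of_le hneg huabs
      (fun t => neg_abs_le _) (fun t => le_abs_self _)
  have hexpp : Tendsto (fun t => Real.exp (p t)) atTop (nhds 1) := by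
    have h1 := hutend.add (tendsto_const_nhds (x := (1:ℝ)))
    simp only [hu_def, zero_add] at h1
    convert h1 using 2 with t
    ring
  have hptend : Tendsto p atTop (nhds 0) := by
    have hlog : Tendsto (fun t => Real.log (Real.exp (p t))) atTop (nhds (Real.log 1)) :=
      ((Real.continuousAt_log one_ne_zero).tendsto).comp hexpp
    simp only [Real.log_exp, Real.log_one] at hlog
    exact hlog
  exact ⟨hptend, hqtend⟩
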